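/- Let H be a real inner product space, q̂, h ∈ H, D ≥ 0, η ∈ [0,1], a = (1/2)‖q̂-h‖² > 0, b = ⟨q̂,h⟩ - ‖h‖², c = (1/2)‖h‖² - (1/2)‖q̂‖² - ηD. If ηD = 0 and ξ₀ = max{0, (-b-√(b²-4ac))/(2a)}, then the relaxed value q = ξ₀q̂ + (1-ξ₀)h satisfies ‖q‖ ≤ ‖q̂‖. -/

import Mathlib

open scoped RealInnerProductSpace

set_option maxHeartbeats 1000000

theorem stmt_17 {H : Type*} [NormedAddCommGroup H] [InnerProductSpace ℝ H]
    (qhat h : H) (D η : ℝ) (hD : 0 ≤ D) (hη : η ∈ Set.Icc (0 : ℝ) 1)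
    (a b c : ℝ)
    (ha : a = (1 / 2) * ‖qhat - h‖ ^ 2) (hapos : 0 < a)
    (hb : b = ⟪qhat, h⟫ - ‖h‖ ^ 2)
    (hc : c = (1 / 2) * ‖h‖ ^ 2 - (1 / 2) * ‖qhat‖ ^ 2 - η * D)
    (hzero : η * D = 0) :
    ‖(max 0 ((-b - Real.sqrt (b ^ 2 - 4 * a * c)) / (2 * a))) • qhat +
        (1 - max 0 ((-b - Real.sqrt (b ^ 2 - 4 * a * c)) / (2 * a))) • h‖ ≤ ‖qhat‖ := by
  have hnorm : ‖qhat - h‖ ^ 2 = ‖qhat‖ ^ 2 - 2 * ⟪qhat, h⟫ + ‖h‖ ^ 2 :=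
    norm_sub_sq_real qhat h
  have hb' : b = -(a + c) := by rw [ha, hb, hc, hnorm]; linarith [hzero]
  have hdisc : b ^ 2 - 4 * a * c = (a - c) ^ 2 := by rw [hb']; ring
  have hsqrt : Real.sqrt (b ^ 2 - 4 * a * c) = |a - c| := by
    rw [hdisc, Real.sqrt_sq_eq_abs]
  set ξ : ℝ := max 0 ((-b - Real.sqrt (b ^ 2 - 4 * a * c)) / (2 * a)) with hξ
  -- the quadratic value at ξ is ≤ 0
  have hquad : a * ξ ^ 2 + b * ξ + c ≤ 0 := by
    rcases le_or_gt c 0 with hcle | hcpos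
    · have hr : (-b - Real.sqrt (b ^ 2 - 4 * a * c)) / (2 * a) ≤ 0 := by
        rw [hsqrt, hb']
        apply div_nonpos_of_nonpos_of_nonneg _ (by linarith)
        rcases abs_cases (a - c) with ⟨h1, _⟩ | ⟨h1, _⟩ <;> linarith
      have : ξ = 0 := by rw [hξ, max_eq_left hr]
      rw [this]; simpa using hcle
    · rcases le_or_gt c a with hca | hca
      · have habs : |a - c| = a - c := abs_of_nonneg (by linarith)
        have hr : (-b - Real.sqrt (b ^ 2 - 4 * a * c)) / (2 * a) = c / a := by
          rw [hsqrt, habs, hb']; field_simp; ring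
        have : ξ = c / a := by
          rw [hξ, hr, max_eq_right (le_of_lt (div_pos hcpos hapos))]
        rw [this]; field_simp; rw [hb']; ring_nf
        nlinarith [hapos]
      · have habs : |a - c| = -(a - c) := abs_of_nonpos (by linarith)
        have hr : (-b - Real.sqrt (b ^ 2 - 4 * a * c)) / (2 * a) = 1 := by
          rw [hsqrt, habs, hb']; field_simp; ring
        have : ξ = 1 := by rw [hξ, hr]; simp
        rw [this, hb']; nlinarith [hapos]
  have hq2 : ‖ξ • qhat + (1 - ξ) • h‖ ^ 2
      = ξ ^ 2 * ‖qhat‖ ^ 2 + 2 * ξ * (1 - ξ) * ⟪qhat, h⟫ + (1 - ξ) ^ 2 * ‖h‖ ^ 2 := by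
    rw [← real_inner_self_eq_norm_sq, inner_add_add_self]
    simp [inner_add_add_self, real_inner_smul_left, real_inner_smul_right,
      real_inner_self_eq_norm_sq, real_inner_comm, norm_smul, mul_pow, sq_abs]
    ring
  have key : ‖ξ • qhat + (1 - ξ) • h‖ ^ 2 ≤ ‖qhat‖ ^ 2 := by
    rw [hq2]
    have := hquad
    rw [ha, hb, hc, hnorm] at this
    nlinarith [hzero]
  have h1 := norm_nonneg (ξ • qhat + (1 - ξ) • h)
  have h2 := norm_nonneg qhat
  nlinarith [key, h1, h2]
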